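/- arXiv:1303.3033 — 2 statements merged into one kernel-verified Lean document; each statement's English description precedes it below -/
import Mathlib

section
/- For all p ≥ 2 and dimension d ≥ 1, there exists a constant C > 0 such that for all Schwartz functions f on ℝ^d, ‖f‖_{L²} ≤ C ‖f‖_{L^p}^θ ‖ |x| f ‖_{L²}^{1-θ}, where θ = 1/(1 + d(1/2 − 1/p)). -/
open MeasureTheory
open scoped ENNReal NNReal

lemma my_split {α F : Type*} [MeasurableSpace α] [NormedAddCommGroup F] (μ : Measure α)
    {s : Set α} (hs : MeasurableSet s) (f : α → F) :
    eLpNorm f 2 μ ≤ eLpNorm f 2 (μ.restrict s) + eLpNorm f 2 (μ.restrict sᶜ) := by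
  have h2 : ((2:ℝ≥0∞)).toReal = 2 := by simp
  rw [eLpNorm_eq_lintegral_rpow_enorm_toReal two_ne_zero ENNReal.ofNat_ne_top,
      eLpNorm_eq_lintegral_rpow_enorm_toReal two_ne_zero ENNReal.ofNat_ne_top,
      eLpNorm_eq_lintegral_rpow_enorm_toReal two_ne_zero ENNReal.ofNat_ne_top, h2]
  have hsum : (∫⁻ x, ‖f x‖ₑ ^ (2:ℝ) ∂μ)
      = (∫⁻ x, ‖f x‖ₑ ^ (2:ℝ) ∂μ.restrict s)
        + ∫⁻ x, ‖f x‖ₑ ^ (2:ℝ) ∂μ.restrict sᶜ := by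
    rw [← lintegral_add_measure, Measure.restrict_add_restrict_compl hs]
  rw [hsum]
  exact ENNReal.rpow_add_le_add_rpow _ _ (by norm_num) (by norm_num)

lemma my_opt {a b k α : ℝ} (ha : 0 < a) (hb : 0 < b) (hk : 0 ≤ k) (hα : 0 < α) :
    a * (((b/a) ^ (1/(1+α))) ^ α * k) + ((b/a) ^ (1/(1+α)))⁻¹ * b
      ≤ (k+1) * ((a ^ (1/(1+α))) * b ^ (1 - 1/(1+α))) := by
  set θ : ℝ := 1/(1+α) with hθdef
  have h1α : (0:ℝ) < 1 + α := by linarith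
  have hθα : θ * α = 1 - θ := by rw [hθdef]; field_simp; ring
  have hba : (0:ℝ) < b / a := div_pos hb ha
  have h1 : a * ((b/a) ^ θ) ^ α = a ^ θ * b ^ (1-θ) := by
    rw [← Real.rpow_mul hba.le, hθα, Real.div_rpow hb.le ha.le]
    rw [show a * (b ^ (1-θ) / a ^ (1-θ)) = a ^ (1:ℝ) / a ^ (1-θ) * b ^ (1-θ) by
      rw [Real.rpow_one]; ring]
    rw [← Real.rpow_sub ha]
    norm_num
  have h2 : ((b/a) ^ θ)⁻¹ * b = a ^ θ * b ^ (1-θ) := by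
    rw [← Real.inv_rpow hba.le, inv_div, Real.div_rpow ha.le hb.le]
    rw [show a ^ θ / b ^ θ * b = a ^ θ * (b ^ (1:ℝ) / b ^ θ) by rw [Real.rpow_one]; ring]
    rw [← Real.rpow_sub hb]
  refine le_of_eq ?_
  rw [← mul_assoc, h1, h2]; ring

lemma my_mem {d : ℕ} {G : Type*} [NormedAddCommGroup G] {h : EuclideanSpace ℝ (Fin d) → G}
    (hcont : Continuous h) {C : ℝ}
    (hC : ∀ x, ‖h x‖ ≤ C * (1 + ‖x‖) ^ (-((d:ℝ)+1)))
    {q : ℝ} (hq : 1 ≤ q) : MemLp h (ENNReal.ofReal q) volume := by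
  set g : EuclideanSpace ℝ (Fin d) → ℝ := fun x => (1 + ‖x‖) ^ (-((d:ℝ)+1)) with hgdef
  have hgpos : ∀ x : EuclideanSpace ℝ (Fin d), 0 < g x := fun x => by
    apply Real.rpow_pos_of_pos; positivity
  have hgcont : Continuous g := by
    apply Continuous.rpow_const (continuous_const.add continuous_norm)
    intro x; left; have hx1 : (0:ℝ) < 1 + ‖x‖ := by positivity
    exact hx1.ne'
  have hq0 : ENNReal.ofReal q ≠ 0 := by
    simp only [ne_eq, ENNReal.ofReal_eq_zero, not_le]; linarith
  have hqt : ENNReal.ofReal q ≠ ∞ := ENNReal.ofReal_ne_top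
  have htq : (ENNReal.ofReal q).toReal = q := ENNReal.toReal_ofReal (by linarith)
  have hint : Integrable (fun x : EuclideanSpace ℝ (Fin d) =>
      ‖g x‖ ^ (ENNReal.ofReal q).toReal) volume := by
    have heq : (fun x : EuclideanSpace ℝ (Fin d) => ‖g x‖ ^ (ENNReal.ofReal q).toReal)
        = fun x => (1 + ‖x‖) ^ (-(((d:ℝ)+1) * q)) := by
      funext x
      rw [htq, Real.norm_of_nonneg (hgpos x).le, hgdef]
      rw [← Real.rpow_mul (by positivity), neg_mul]
    rw [heq]
    apply integrable_one_add_norm (μ := volume)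
    rw [finrank_euclideanSpace_fin]
    nlinarith [Nat.cast_nonneg (α := ℝ) d]
  have hgq : MemLp g (ENNReal.ofReal q) volume := by
    refine (memLp_norm_rpow_iff hgcont.aestronglyMeasurable hq0 hqt).mp ?_
    rw [ENNReal.div_self hq0 hqt]
    exact memLp_one_iff_integrable.mpr hint
  refine hgq.of_le_mul (c := C) hcont.aestronglyMeasurable
    (Filter.Eventually.of_forall fun x => ?_)
  rw [Real.norm_of_nonneg (hgpos x).le]
  exact hC x

/-- Schwartz decay: `‖f x‖ ≤ C (1+‖x‖)^{-(d+1)}` for some `C ≥ 0`. -/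
lemma my_decay0 {d : ℕ} (f : SchwartzMap (EuclideanSpace ℝ (Fin d)) ℂ) :
    ∃ C : ℝ, ∀ x, ‖f x‖ ≤ C * (1 + ‖x‖) ^ (-((d:ℝ)+1)) := by
  refine ⟨2 ^ (d+1) * (Finset.Iic (d+1, 0)).sup
    (fun m => SchwartzMap.seminorm ℝ m.1 m.2) f, fun x => ?_⟩
  have h := SchwartzMap.one_add_le_sup_seminorm_apply (𝕜 := ℝ) (m := (d+1, 0))
    le_rfl le_rfl f x
  rw [norm_iteratedFDeriv_zero] at h
  have hpos : (0:ℝ) < 1 + ‖x‖ := by positivity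
  have hpow : (1 + ‖x‖) ^ (-((d:ℝ)+1)) = ((1 + ‖x‖) ^ (d+1))⁻¹ := by
    rw [← Real.rpow_natCast (1 + ‖x‖) (d+1), ← Real.rpow_neg hpos.le]
    norm_num
  rw [hpow, le_mul_inv_iff₀ (by positivity), mul_comm]
  exact h

lemma my_decay1 {d : ℕ} (f : SchwartzMap (EuclideanSpace ℝ (Fin d)) ℂ) :
    ∃ C : ℝ, ∀ x, ‖x‖ * ‖f x‖ ≤ C * (1 + ‖x‖) ^ (-((d:ℝ)+1)) := by
  refine ⟨2 ^ (d+2) * (Finset.Iic (d+2, 0)).sup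
    (fun m => SchwartzMap.seminorm ℝ m.1 m.2) f, fun x => ?_⟩
  have h := SchwartzMap.one_add_le_sup_seminorm_apply (𝕜 := ℝ) (m := (d+2, 0))
    le_rfl le_rfl f x
  rw [norm_iteratedFDeriv_zero] at h
  have hpos : (0:ℝ) < 1 + ‖x‖ := by positivity
  have htpos : (0:ℝ) < (1 + ‖x‖) ^ (-((d:ℝ)+1)) := Real.rpow_pos_of_pos hpos _
  have ht : ((1 + ‖x‖) ^ (d+2)) * (1 + ‖x‖) ^ (-((d:ℝ)+1)) = 1 + ‖x‖ := by
    rw [← Real.rpow_natCast (1 + ‖x‖) (d+2), ← Real.rpow_add hpos]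
    rw [show ((d+2 : ℕ) : ℝ) + (-((d:ℝ)+1)) = 1 by push_cast; ring, Real.rpow_one]
  calc ‖x‖ * ‖f x‖ ≤ (1 + ‖x‖) * ‖f x‖ :=
        mul_le_mul_of_nonneg_right (by linarith [norm_nonneg x]) (norm_nonneg _)
    _ = ((1 + ‖x‖) ^ (d+2) * ‖f x‖) * (1 + ‖x‖) ^ (-((d:ℝ)+1)) := by
        rw [mul_right_comm, ht]
    _ ≤ _ := mul_le_mul_of_nonneg_right h htpos.le

/-- Dual Nash / localization inequality: for `p ≥ 2` and `d ≥ 1` there is `C > 0` such that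
for all Schwartz functions `f` on `ℝ^d`,
`‖f‖_{L²} ≤ C ‖f‖_{L^p}^θ ‖|x| f‖_{L²}^{1-θ}` with `θ = 1/(1 + d(1/2 - 1/p))`. -/
theorem dual_nash_inequality (d : ℕ) (hd : 1 ≤ d) (p : ℝ) (hp : 2 ≤ p) :
    ∃ C : ℝ, 0 < C ∧ ∀ f : SchwartzMap (EuclideanSpace ℝ (Fin d)) ℂ,
      eLpNorm (⇑f) 2 volume ≤
        ENNReal.ofReal C *
          eLpNorm (⇑f) (ENNReal.ofReal p) volume ^ (1 / (1 + (d : ℝ) * (1/2 - 1/p))) *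
          eLpNorm (fun x => ‖x‖ * ‖f x‖) 2 volume ^
            (1 - 1 / (1 + (d : ℝ) * (1/2 - 1/p))) := by
  haveI : Nontrivial (EuclideanSpace ℝ (Fin d)) := by
    have h : 0 < Module.finrank ℝ (EuclideanSpace ℝ (Fin d)) := by
      rw [finrank_euclideanSpace_fin]; omega
    exact Module.nontrivial_of_finrank_pos h
  have hp0 : (0:ℝ) < p := by linarith
  rcases eq_or_lt_of_le hp with hp2 | hp2
  · -- p = 2
    refine ⟨1, one_pos, fun f => ?_⟩
    subst hp2
    have hθ : 1 / (1 + (d:ℝ) * (1/2 - 1/2)) = 1 := by norm_num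
    rw [hθ]
    simp [ENNReal.rpow_one, ENNReal.ofReal_ofNat]
  · -- p > 2
    set e : ℝ := 1/2 - 1/p with hedef
    have he : 0 < e := by
      rw [hedef]
      have : 1/p < 1/2 := by rw [div_lt_div_iff₀ hp0 two_pos]; linarith
      linarith
    set α : ℝ := (d:ℝ) * e with hαdef
    have hdpos : (0:ℝ) < d := by exact_mod_cast Nat.pos_of_ne_zero (by omega)
    have hα : 0 < α := mul_pos hdpos he
    set θ : ℝ := 1 / (1 + α) with hθdef
    set v : ℝ≥0∞ := volume (Metric.ball (0 : EuclideanSpace ℝ (Fin d)) 1) with hvdef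
    have hvt : v ≠ ⊤ := measure_ball_lt_top.ne
    set K : ℝ≥0∞ := v ^ e with hKdef
    have hKt : K ≠ ⊤ := ENNReal.rpow_ne_top_of_nonneg he.le hvt
    set k : ℝ := K.toReal with hkdef
    have hk : 0 ≤ k := ENNReal.toReal_nonneg
    have hkK : ENNReal.ofReal k = K := ENNReal.ofReal_toReal hKt
    refine ⟨k + 1, by linarith, fun f => ?_⟩
    have h2p : (2:ℝ≥0∞) ≤ ENNReal.ofReal p := by
      rw [show (2:ℝ≥0∞) = ENNReal.ofReal 2 from (ENNReal.ofReal_ofNat 2).symm]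
      exact ENNReal.ofReal_le_ofReal hp
    set A : ℝ≥0∞ := eLpNorm (⇑f) (ENNReal.ofReal p) volume with hAdef
    set B : ℝ≥0∞ := eLpNorm (fun x : EuclideanSpace ℝ (Fin d) => ‖x‖ * ‖f x‖) 2 volume
      with hBdef
    have hgcont : Continuous (fun x : EuclideanSpace ℝ (Fin d) => ‖x‖ * ‖f x‖) :=
      continuous_norm.mul f.continuous.norm
    -- finiteness
    have hA_lt : A < ⊤ := by
      obtain ⟨C0, hC0⟩ := my_decay0 f
      exact (my_mem f.continuous hC0 (by linarith : (1:ℝ) ≤ p)).2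
    have hB_lt : B < ⊤ := by
      obtain ⟨C1, hC1⟩ := my_decay1 f
      have := (my_mem hgcont (C := C1) (fun x => by
        rw [Real.norm_of_nonneg (by positivity)]; exact hC1 x) (by norm_num : (1:ℝ) ≤ 2)).2
      rwa [ENNReal.ofReal_ofNat] at this
    by_cases hA0 : A = 0
    · have hf0 : ⇑f =ᵐ[volume] 0 := by
        rw [hAdef] at hA0
        exact (eLpNorm_eq_zero_iff f.continuous.aestronglyMeasurable
          (by simp only [ne_eq, ENNReal.ofReal_eq_zero, not_le]; linarith)).mp hA0
      have hN : eLpNorm (⇑f) 2 volume = 0 :=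
        (eLpNorm_eq_zero_iff f.continuous.aestronglyMeasurable two_ne_zero).mpr hf0
      rw [hN]; exact zero_le
    by_cases hB0 : B = 0
    · have hg0 : (fun x : EuclideanSpace ℝ (Fin d) => ‖x‖ * ‖f x‖) =ᵐ[volume] 0 :=
        (eLpNorm_eq_zero_iff hgcont.aestronglyMeasurable two_ne_zero).mp hB0
      have h0vol : volume ({(0:EuclideanSpace ℝ (Fin d))} : Set (EuclideanSpace ℝ (Fin d))) = 0 :=
        measure_singleton _
      have hf0 : ⇑f =ᵐ[volume] 0 := by
        filter_upwards [hg0, compl_mem_ae_iff.mpr h0vol] with x hx hxne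
        simp only [Set.mem_compl_iff, Set.mem_singleton_iff] at hxne
        simp only [Pi.zero_apply] at hx ⊢
        rcases mul_eq_zero.mp hx with h | h
        · exact absurd (norm_eq_zero.mp h) hxne
        · exact norm_eq_zero.mp h
      have hN : eLpNorm (⇑f) 2 volume = 0 :=
        (eLpNorm_eq_zero_iff f.continuous.aestronglyMeasurable two_ne_zero).mpr hf0
      rw [hN]; exact zero_le
    -- main case
    set a : ℝ := A.toReal with hadef
    set b : ℝ := B.toReal with hbdef
    have ha : 0 < a := ENNReal.toReal_pos hA0 hA_lt.ne
    have hb : 0 < b := ENNReal.toReal_pos hB0 hB_lt.ne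
    have haA : ENNReal.ofReal a = A := ENNReal.ofReal_toReal hA_lt.ne
    have hbB : ENNReal.ofReal b = B := ENNReal.ofReal_toReal hB_lt.ne
    set R : ℝ := (b/a) ^ θ with hRdef
    have hR : 0 < R := Real.rpow_pos_of_pos (div_pos hb ha) _
    -- ball estimate
    haveI : IsFiniteMeasure (volume.restrict (Metric.ball (0:EuclideanSpace ℝ (Fin d)) R)) :=
      ⟨by rw [Measure.restrict_apply_univ]; exact measure_ball_lt_top⟩
    have hball : eLpNorm (⇑f) 2 (volume.restrict (Metric.ball (0:EuclideanSpace ℝ (Fin d)) R))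
        ≤ A * (volume (Metric.ball (0:EuclideanSpace ℝ (Fin d)) R)) ^ e := by
      have h1 := eLpNorm_le_eLpNorm_mul_rpow_measure_univ (p := (2:ℝ≥0∞))
        (q := ENNReal.ofReal p) h2p
        (f.continuous.aestronglyMeasurable
          (μ := volume.restrict (Metric.ball (0:EuclideanSpace ℝ (Fin d)) R)))
      refine h1.trans ?_
      rw [Measure.restrict_apply_univ]
      have hexp : 1/(2:ℝ≥0∞).toReal - 1/(ENNReal.ofReal p).toReal = e := by
        rw [ENNReal.toReal_ofReal hp0.le, ENNReal.toReal_ofNat, hedef]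
      rw [hexp]
      exact mul_le_mul_left (eLpNorm_mono_measure _ Measure.restrict_le_self) _
    have hvol : (volume (Metric.ball (0:EuclideanSpace ℝ (Fin d)) R)) ^ e
        = ENNReal.ofReal (R ^ α) * K := by
      rw [Measure.addHaar_ball volume (0:EuclideanSpace ℝ (Fin d)) hR.le,
        ENNReal.mul_rpow_of_nonneg _ _ he.le, hKdef, hvdef]
      congr 1
      rw [ENNReal.ofReal_rpow_of_pos (by positivity)]
      congr 1
      rw [← Real.rpow_natCast R (Module.finrank ℝ (EuclideanSpace ℝ (Fin d))),
        ← Real.rpow_mul hR.le, finrank_euclideanSpace_fin, hαdef]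
    -- tail estimate
    have htail : eLpNorm (⇑f) 2
        (volume.restrict (Metric.ball (0:EuclideanSpace ℝ (Fin d)) R)ᶜ)
        ≤ ENNReal.ofReal R⁻¹ * B := by
      have hptw : ∀ᵐ x ∂(volume.restrict (Metric.ball (0:EuclideanSpace ℝ (Fin d)) R)ᶜ),
          ‖f x‖ ≤ ‖(R⁻¹ • fun y : EuclideanSpace ℝ (Fin d) => ‖y‖ * ‖f y‖) x‖ := by
        rw [ae_restrict_iff' measurableSet_ball.compl]
        refine ae_of_all _ fun x hx => ?_
        simp only [Set.mem_compl_iff, Metric.mem_ball, dist_zero_right, not_lt] at hx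
        simp only [Pi.smul_apply, smul_eq_mul, Real.norm_eq_abs]
        rw [abs_of_nonneg (by positivity)]
        have hRinv : 0 < R⁻¹ := inv_pos.mpr hR
        have h1 : 1 ≤ R⁻¹ * ‖x‖ := by
          have := mul_le_mul_of_nonneg_left hx hRinv.le
          rwa [inv_mul_cancel₀ hR.ne'] at this
        nlinarith [norm_nonneg (f x)]
      calc eLpNorm (⇑f) 2 (volume.restrict (Metric.ball (0:EuclideanSpace ℝ (Fin d)) R)ᶜ)
          ≤ eLpNorm (R⁻¹ • fun y : EuclideanSpace ℝ (Fin d) => ‖y‖ * ‖f y‖) 2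
            (volume.restrict (Metric.ball (0:EuclideanSpace ℝ (Fin d)) R)ᶜ) :=
            eLpNorm_mono_ae hptw
        _ = ‖R⁻¹‖₊ • eLpNorm (fun y : EuclideanSpace ℝ (Fin d) => ‖y‖ * ‖f y‖) 2
            (volume.restrict (Metric.ball (0:EuclideanSpace ℝ (Fin d)) R)ᶜ) :=
            eLpNorm_const_smul _ _ _ _
        _ ≤ ENNReal.ofReal R⁻¹ * B := by
            rw [ENNReal.smul_def, smul_eq_mul,
              ← enorm_eq_nnnorm, Real.enorm_eq_ofReal (inv_pos.mpr hR).le]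
            exact mul_le_mul_right (eLpNorm_mono_measure _ Measure.restrict_le_self) _
    -- combine
    have key : eLpNorm (⇑f) 2 volume
        ≤ ENNReal.ofReal ((k+1) * (a ^ θ * b ^ (1-θ))) := by
      calc eLpNorm (⇑f) 2 volume
          ≤ eLpNorm (⇑f) 2 (volume.restrict (Metric.ball (0:EuclideanSpace ℝ (Fin d)) R))
            + eLpNorm (⇑f) 2
              (volume.restrict (Metric.ball (0:EuclideanSpace ℝ (Fin d)) R)ᶜ) :=
            my_split volume measurableSet_ball (⇑f)
        _ ≤ A * (ENNReal.ofReal (R ^ α) * K) + ENNReal.ofReal R⁻¹ * B := by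
            refine add_le_add (hball.trans ?_) htail
            rw [hvol]
        _ = ENNReal.ofReal (a * (R ^ α * k) + R⁻¹ * b) := by
            rw [← haA, ← hbB, ← hkK,
              ← ENNReal.ofReal_mul (by positivity : (0:ℝ) ≤ R ^ α),
              ← ENNReal.ofReal_mul ha.le,
              ← ENNReal.ofReal_mul (inv_pos.mpr hR).le,
              ← ENNReal.ofReal_add (by positivity) (by positivity)]
        _ ≤ ENNReal.ofReal ((k+1) * (a ^ θ * b ^ (1-θ))) := by
            refine ENNReal.ofReal_le_ofReal ?_
            rw [hRdef, hθdef]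
            exact my_opt ha hb hk hα
    refine key.trans (le_of_eq ?_)
    rw [← haA, ← hbB, ENNReal.ofReal_rpow_of_pos ha, ENNReal.ofReal_rpow_of_pos hb,
      ← ENNReal.ofReal_mul (by positivity), ← ENNReal.ofReal_mul (by positivity),
      mul_assoc]
end

section
/- Let u ∈ L^∞(ℝ₊; Σ) (i.e., sup_t (‖u(t)‖_{H¹} + ‖|x|u(t)‖_{L²}) < ∞) satisfy (d/dt)‖u(t)‖²_{L²} + 2a‖u(t)‖^{2σ₂+2}_{L^{2σ₂+2}} = 0 with a > 0, σ₂ > 0. Then there exists C > 0 with ‖u(t)‖²_{L²} ≤ C t^{−2/((d+2)σ₂)} for all t ≥ 1. -/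
open MeasureTheory
open Set
open scoped ENNReal

lemma aux_ode (c p q : ℝ) (hc : 0 < c) (hp : 1 < p) (hq : 0 < q) (hqp : q * (p-1) = 1)
    (y g : ℝ → ℝ) (hynn : ∀ t, 0 ≤ y t)
    (hderiv : ∀ t : ℝ, 0 ≤ t → HasDerivAt y (-(g t)) t)
    (hg : ∀ t : ℝ, 0 ≤ t → c * y t ^ p ≤ g t)
    (B' : ℝ) (hB' : 0 < B') (hy1 : y 1 ≤ B') :
    ∃ C : ℝ, 0 < C ∧ ∀ t : ℝ, 1 ≤ t → y t ≤ C * t ^ (-q) := by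
  set K : ℝ := max B' ((q/c+1) ^ q) with hK
  have hX1 : (1:ℝ) < q/c + 1 := by
    have : 0 < q / c := div_pos hq hc
    linarith
  have hXq : 0 < (q/c+1) ^ q := Real.rpow_pos_of_pos (by linarith) _
  have hKpos : 0 < K := lt_max_of_lt_right hXq
  have hKB : B' ≤ K := le_max_left _ _
  -- main estimate: c * K^(p-1) > q
  have hKp1 : q < c * K ^ (p-1) := by
    have h1 : (q/c+1) ^ q ≤ K := le_max_right _ _
    have h2 : ((q/c+1) ^ q) ^ (p-1) ≤ K ^ (p-1) :=
      Real.rpow_le_rpow (le_of_lt hXq) h1 (by linarith)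
    have h3 : ((q/c+1) ^ q) ^ (p-1) = q/c + 1 := by
      rw [← Real.rpow_mul (by linarith : (0:ℝ) ≤ q/c+1), hqp, Real.rpow_one]
    have h4 : q/c + 1 ≤ K ^ (p-1) := h3 ▸ h2
    have : c * (q/c+1) ≤ c * K ^ (p-1) := by nlinarith
    have hcq : c * (q/c+1) = q + c := by field_simp
    nlinarith
  refine ⟨K, hKpos, fun t ht => ?_⟩
  have key : y t ≤ K * t ^ (-q) := by
    refine image_le_of_deriv_right_lt_deriv_boundary'
      (f' := fun x => -(g x)) (B := fun x => K * x ^ (-q)) (B' := fun x => K * (-q * x ^ (-q - 1)))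
      ?_ ?_ ?_ ?_ ?_ ?_ ⟨ht, le_rfl⟩
    · exact fun x hx => ((hderiv x (by linarith [hx.1])).continuousAt).continuousWithinAt
    · exact fun x hx => (hderiv x (by linarith [hx.1])).hasDerivWithinAt
    · simpa [Real.one_rpow] using le_trans hy1 hKB
    · intro x hx
      have hx0 : x ≠ 0 := by intro h; rw [h] at hx; linarith [hx.1]
      exact ((Real.hasDerivAt_rpow_const (p := -q) (Or.inl hx0)).const_mul
        K).continuousAt.continuousWithinAt
    · intro x hx
      have hx0 : x ≠ 0 := by intro h; rw [h] at hx; linarith [hx.1]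
      exact ((Real.hasDerivAt_rpow_const (p := -q) (Or.inl hx0)).const_mul K).hasDerivWithinAt
    · intro x hx heq
      have hx1 : (1:ℝ) ≤ x := hx.1
      have hx0 : (0:ℝ) < x := by linarith
      have hMx : c * y x ^ p ≤ g x := hg x (by linarith)
      have hyx : y x ^ p = K ^ p * x ^ (-(q+1)) := by
        have hexp : -q * p = -(q+1) := by nlinarith [hqp]
        rw [heq, Real.mul_rpow (le_of_lt hKpos) (Real.rpow_nonneg (le_of_lt hx0) _),
          ← Real.rpow_mul (le_of_lt hx0), hexp]
      have hxq1 : (0:ℝ) < x ^ (-(q+1)) := Real.rpow_pos_of_pos hx0 _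
      have hKppow : K ^ p = K ^ (p-1) * K := by
        rw [← Real.rpow_add_one (ne_of_gt hKpos)]; ring_nf
      have hstrict : q * K < c * K ^ p := by
        rw [hKppow, ← mul_assoc]
        exact mul_lt_mul_of_pos_right hKp1 hKpos
      have h5 : q * K * x ^ (-(q+1)) < c * K ^ p * x ^ (-(q+1)) :=
        mul_lt_mul_of_pos_right hstrict hxq1
      have h6 : c * y x ^ p = c * K ^ p * x ^ (-(q+1)) := by rw [hyx]; ring
      have : -(g x) < -(q * K * x ^ (-(q+1)))  := by
        apply neg_lt_neg
        calc q * K * x ^ (-(q+1)) < c * K ^ p * x ^ (-(q+1)) := h5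
        _ = c * y x ^ p := h6.symm
        _ ≤ g x := hMx
      calc -(g x) < -(q * K * x ^ (-(q+1))) := this
      _ = K * (-q * x ^ (-q - 1)) := by ring_nf
  exact key


lemma aux_coercive (d : ℕ) (hd : 1 ≤ d) (σ₂ : ℝ) (hσ₂ : 0 < σ₂) (B' : ℝ) (hB'pos : 0 < B')
    (f : EuclideanSpace ℝ (Fin d) → ℂ)
    (h2 : MemLp f 2 volume) (hp : MemLp f (ENNReal.ofReal (2*σ₂+2)) volume)
    (hx : Integrable (fun x : EuclideanSpace ℝ (Fin d) => ‖x‖^2 * ‖f x‖^2))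
    (hxB : (∫ x : EuclideanSpace ℝ (Fin d), ‖x‖^2 * ‖f x‖^2) ≤ B') :
    ((2:ℝ)^(σ₂+1) * (2*B')^((d:ℝ)*σ₂/2) *
      ((volume (Metric.ball (0:EuclideanSpace ℝ (Fin d)) 1)).toReal)^σ₂)⁻¹ *
      (∫ x, ‖f x‖^2) ^ (σ₂+1+(d:ℝ)*σ₂/2) ≤ ∫ x, ‖f x‖^(2*σ₂+2) := by
  set V₁ : ℝ := (volume (Metric.ball (0:EuclideanSpace ℝ (Fin d)) 1)).toReal with hV₁
  set y : ℝ := ∫ x, ‖f x‖^2 with hy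
  set M : ℝ := ∫ x, ‖f x‖^(2*σ₂+2) with hM
  have hV₁pos : 0 < V₁ := by
    refine ENNReal.toReal_pos (ne_of_gt (Metric.measure_ball_pos _ _ one_pos)) ?_
    exact ((measure_mono Metric.ball_subset_closedBall).trans_lt
      (isCompact_closedBall _ _).measure_lt_top).ne
  have hynn : 0 ≤ y := integral_nonneg fun x => sq_nonneg _
  have hMnn : 0 ≤ M := integral_nonneg fun x => Real.rpow_nonneg (norm_nonneg _) _
  have hf2 : Integrable (fun x : EuclideanSpace ℝ (Fin d) => ‖f x‖^2) volume := by
    have h := memLp_one_iff_integrable.mp (h2.norm_rpow two_ne_zero ENNReal.ofNat_ne_top)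
    have heq : (fun x : EuclideanSpace ℝ (Fin d) => ‖f x‖ ^ ENNReal.toReal 2)
        = fun x => ‖f x‖^2 := by
      funext x
      rw [ENNReal.toReal_ofNat, show (2:ℝ) = ((2:ℕ):ℝ) by norm_num, Real.rpow_natCast]
    rwa [heq] at h
  have hFmem : MemLp (fun x : EuclideanSpace ℝ (Fin d) => ‖f x‖^2)
      (ENNReal.ofReal (σ₂+1)) volume := by
    have h := hp.norm_rpow_div 2
    have hdiv : ENNReal.ofReal (2*σ₂+2) / 2 = ENNReal.ofReal (σ₂+1) := by
      rw [show (2:ℝ≥0∞) = ENNReal.ofReal 2 by simp,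
        ← ENNReal.ofReal_div_of_pos (by norm_num)]
      congr 1; ring
    rw [hdiv] at h
    have heq : (fun x : EuclideanSpace ℝ (Fin d) => ‖f x‖ ^ ENNReal.toReal 2)
        = fun x => ‖f x‖^2 := by
      funext x
      rw [ENNReal.toReal_ofNat, show (2:ℝ) = ((2:ℕ):ℝ) by norm_num, Real.rpow_natCast]
    rwa [heq] at h
  -- the split bound
  have split : ∀ R : ℝ, 0 < R →
      y ≤ M ^ (1/(σ₂+1)) * (R^d * V₁) ^ (σ₂/(σ₂+1)) + B' * R ^ (-2:ℝ) := by
    intro R hR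
    set s := Metric.closedBall (0 : EuclideanSpace ℝ (Fin d)) R with hs
    have hsm : MeasurableSet s := measurableSet_closedBall
    have hvs : volume s ≠ ∞ := (isCompact_closedBall _ _).measure_lt_top.ne
    have hysplit : y = (∫ x in s, ‖f x‖^2) + ∫ x in sᶜ, ‖f x‖^2 :=
      (integral_add_compl hsm hf2).symm
    have hR2 : R ^ (-2:ℝ) = (R^2)⁻¹ := by
      rw [show (-2:ℝ) = -((2:ℕ):ℝ) by norm_num, Real.rpow_neg hR.le, Real.rpow_natCast]
    have htail : (∫ x in sᶜ, ‖f x‖^2) ≤ B' * R ^ (-2:ℝ) := by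
      have hmono : (∫ x in sᶜ, ‖f x‖^2)
          ≤ ∫ x in sᶜ, (R^2)⁻¹ * (‖x‖^2 * ‖f x‖^2) := by
        refine setIntegral_mono_on hf2.integrableOn ((hx.const_mul _).integrableOn)
          hsm.compl ?_
        intro x hxs
        have hxR : R < ‖x‖ := by
          simp only [hs, Set.mem_compl_iff, Metric.mem_closedBall, dist_zero_right,
            not_le] at hxs
          exact hxs
        have hk : 1 ≤ (R^2)⁻¹ * ‖x‖^2 := by
          rw [inv_mul_eq_div, le_div_iff₀ (by positivity)]
          nlinarith
        calc ‖f x‖^2 = 1 * ‖f x‖^2 := (one_mul _).symm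
          _ ≤ ((R^2)⁻¹ * ‖x‖^2) * ‖f x‖^2 := mul_le_mul_of_nonneg_right hk (sq_nonneg _)
          _ = (R^2)⁻¹ * (‖x‖^2 * ‖f x‖^2) := by ring
      have hle2 : (∫ x in sᶜ, (R^2)⁻¹ * (‖x‖^2 * ‖f x‖^2))
          ≤ (R^2)⁻¹ * B' := by
        rw [integral_const_mul]
        refine mul_le_mul_of_nonneg_left ?_ (by positivity)
        exact le_trans (setIntegral_le_integral hx (ae_of_all _ fun x => by positivity)) hxB
      rw [hR2]
      calc (∫ x in sᶜ, ‖f x‖^2) ≤ (R^2)⁻¹ * B' := le_trans hmono hle2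
        _ = B' * (R^2)⁻¹ := by ring
    have hball : (∫ x in s, ‖f x‖^2)
        ≤ M ^ (1/(σ₂+1)) * ((volume s).toReal) ^ (σ₂/(σ₂+1)) := by
      have hpq : Real.HolderConjugate (σ₂+1) ((σ₂+1)/σ₂) :=
        (Real.holderConjugate_iff_eq_conjExponent (by linarith)).mpr (by congr 1; ring)
      set G := s.indicator (fun _ => (1:ℝ)) with hG
      have hGnn : 0 ≤ᵐ[volume] G :=
        ae_of_all _ (Set.indicator_nonneg (fun _ _ => zero_le_one))
      have hFnn : 0 ≤ᵐ[volume] (fun x : EuclideanSpace ℝ (Fin d) => ‖f x‖^2) :=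
        ae_of_all _ fun x => sq_nonneg _
      have hGmem : MemLp G (ENNReal.ofReal ((σ₂+1)/σ₂)) volume :=
        memLp_indicator_const _ hsm 1 (Or.inr hvs)
      have hH := integral_mul_le_Lp_mul_Lq_of_nonneg hpq hFnn hGnn hFmem hGmem
      have hLHS : (∫ x, ‖f x‖^2 * G x) = ∫ x in s, ‖f x‖^2 := by
        rw [← integral_indicator hsm]
        congr 1; funext x
        by_cases hxx : x ∈ s <;> simp [hG, hxx]
      have hF1 : (∫ x : EuclideanSpace ℝ (Fin d), (‖f x‖^2) ^ (σ₂+1)) = M := by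
        rw [hM]; congr 1; funext x
        rw [show (‖f x‖:ℝ)^2 = ‖f x‖ ^ ((2:ℕ):ℝ) from (Real.rpow_natCast _ 2).symm,
          ← Real.rpow_mul (norm_nonneg _)]
        congr 1; push_cast; ring
      have hF2 : (∫ x : EuclideanSpace ℝ (Fin d), G x ^ ((σ₂+1)/σ₂)) = (volume s).toReal := by
        have hGq : (fun x : EuclideanSpace ℝ (Fin d) => G x ^ ((σ₂+1)/σ₂)) = G := by
          funext x
          by_cases hxx : x ∈ s
          · simp [hG, hxx]
          · simp only [hG, Set.indicator_of_notMem hxx]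
            exact Real.zero_rpow (by positivity)
        rw [hGq, hG, integral_indicator_const _ hsm, smul_eq_mul, mul_one, Measure.real]
      rw [hLHS, hF1, hF2, one_div_div] at hH
      exact hH
    have hvol : (volume s).toReal = R^d * V₁ := by
      rw [hs, Measure.addHaar_closedBall _ _ hR.le, finrank_euclideanSpace_fin,
        ENNReal.toReal_mul, ENNReal.toReal_ofReal (by positivity)]
    rw [hysplit]
    rw [hvol] at hball
    exact add_le_add hball htail
  -- optimization
  rcases eq_or_lt_of_le hynn with hy0 | hypos
  · rw [← hy0, Real.zero_rpow (by positivity), mul_zero]; exact hMnn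
  set X : ℝ := 2*B'/y with hX
  have hXpos : 0 < X := by positivity
  set R : ℝ := X ^ ((1:ℝ)/2) with hR
  have hRpos : 0 < R := Real.rpow_pos_of_pos hXpos _
  have hsp := split R hRpos
  have hRtail : B' * R ^ (-2:ℝ) = y / 2 := by
    rw [hR, ← Real.rpow_mul hXpos.le]
    norm_num
    rw [Real.rpow_neg_one, hX, inv_div]
    field_simp
  have hRd : R^d = X ^ ((d:ℝ)/2) := by
    rw [hR, ← Real.rpow_natCast (X ^ ((1:ℝ)/2)) d, ← Real.rpow_mul hXpos.le]
    congr 1; ring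
  rw [hRtail, hRd] at hsp
  set W : ℝ := (X ^ ((d:ℝ)/2) * V₁) ^ (σ₂/(σ₂+1)) with hW
  have hWpos : 0 < W :=
    Real.rpow_pos_of_pos (mul_pos (Real.rpow_pos_of_pos hXpos _) hV₁pos) _
  have h7 : y/2 ≤ M ^ (1/(σ₂+1)) * W := by linarith
  have h8 : (y/2)/W ≤ M ^ (1/(σ₂+1)) := (div_le_iff₀ hWpos).mpr h7
  have h9 : ((y/2)/W) ^ (σ₂+1) ≤ (M ^ (1/(σ₂+1))) ^ (σ₂+1) :=
    Real.rpow_le_rpow (by positivity) h8 (by linarith)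
  have h10 : (M ^ (1/(σ₂+1))) ^ (σ₂+1) = M := by
    rw [← Real.rpow_mul hMnn, one_div_mul_cancel (by linarith : σ₂+1 ≠ 0), Real.rpow_one]
  rw [h10] at h9
  -- compute the left side
  have hWpow : W ^ (σ₂+1) = ((2*B') ^ ((d:ℝ)*σ₂/2) / y ^ ((d:ℝ)*σ₂/2)) * V₁ ^ σ₂ := by
    rw [hW, ← Real.rpow_mul (by positivity), div_mul_cancel₀ _ (by linarith : σ₂+1 ≠ 0),
      Real.mul_rpow (by positivity) hV₁pos.le, ← Real.rpow_mul hXpos.le,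
      show (d:ℝ)/2*σ₂ = (d:ℝ)*σ₂/2 by ring, hX,
      Real.div_rpow (by positivity) hynn]
  have hA1 : ((y/2)/W) ^ (σ₂+1) = (y ^ (σ₂+1) / 2 ^ (σ₂+1)) / W ^ (σ₂+1) := by
    rw [Real.div_rpow (by positivity) hWpos.le, Real.div_rpow hynn (by norm_num)]
  have hsum : y ^ (σ₂+1+(d:ℝ)*σ₂/2) = y ^ (σ₂+1) * y ^ ((d:ℝ)*σ₂/2) :=
    Real.rpow_add hypos _ _
  have h2p : (0:ℝ) < (2:ℝ)^(σ₂+1) := Real.rpow_pos_of_pos two_pos _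
  have hBp : (0:ℝ) < (2*B')^((d:ℝ)*σ₂/2) := Real.rpow_pos_of_pos (by positivity) _
  have hVp : (0:ℝ) < V₁^σ₂ := Real.rpow_pos_of_pos hV₁pos _
  have hyp1 : (0:ℝ) < y^(σ₂+1) := Real.rpow_pos_of_pos hypos _
  have hyp2 : (0:ℝ) < y^((d:ℝ)*σ₂/2) := Real.rpow_pos_of_pos hypos _
  calc ((2:ℝ)^(σ₂+1) * (2*B')^((d:ℝ)*σ₂/2) * V₁^σ₂)⁻¹ * y ^ (σ₂+1+(d:ℝ)*σ₂/2)
      = (y ^ (σ₂+1) / 2 ^ (σ₂+1)) / W ^ (σ₂+1) := by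
        rw [hWpow, hsum]
        field_simp
    _ = (y/2/W) ^ (σ₂+1) := hA1.symm
    _ ≤ M := h9

/-- Asymptotic extinction under full confinement: if `u ∈ L^∞(ℝ₊; Σ)` (uniform bounds
on mass, kinetic energy and second moment) satisfies the mass dissipation identity
`(d/dt)‖u(t)‖² + 2a‖u(t)‖_{2σ₂+2}^{2σ₂+2} = 0` with `a > 0`, `σ₂ > 0`, then
`‖u(t)‖² ≤ C t^{-2/((d+2)σ₂)}` for `t ≥ 1`. -/
theorem asymptotic_extinction (d : ℕ) (hd : 1 ≤ d) (a σ₂ : ℝ) (ha : 0 < a) (hσ₂ : 0 < σ₂)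
    (u : ℝ → EuclideanSpace ℝ (Fin d) → ℂ)
    (hmem2 : ∀ t : ℝ, MemLp (u t) 2 volume)
    (hmemp : ∀ t : ℝ, MemLp (u t) (ENNReal.ofReal (2*σ₂+2)) volume)
    (hxint : ∀ t : ℝ, Integrable (fun x : EuclideanSpace ℝ (Fin d) => ‖x‖ ^ 2 * ‖u t x‖ ^ 2))
    (hbound : ∃ B : ℝ, ∀ t : ℝ, 0 ≤ t →
      (∫ x, ‖u t x‖ ^ 2) ≤ B ∧
      (∫ x : EuclideanSpace ℝ (Fin d),
        ∑ j : Fin d, ‖fderiv ℝ (u t) x (EuclideanSpace.single j 1)‖ ^ 2) ≤ B ∧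
      (∫ x : EuclideanSpace ℝ (Fin d), ‖x‖ ^ 2 * ‖u t x‖ ^ 2) ≤ B)
    (hdiss : ∀ t : ℝ, 0 ≤ t →
      HasDerivAt (fun s => ∫ x, ‖u s x‖ ^ 2) (-2 * a * ∫ x, ‖u t x‖ ^ (2*σ₂+2)) t) :
    ∃ C : ℝ, 0 < C ∧ ∀ t : ℝ, 1 ≤ t →
      (∫ x, ‖u t x‖ ^ 2) ≤ C * t ^ (-(2 / (((d : ℝ) + 2) * σ₂))) := by
  obtain ⟨B, hB⟩ := hbound
  set B' : ℝ := B + 1 with hB'def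
  have hB'pos : 0 < B' := by
    have h1 := (hB 0 le_rfl).1
    have h2 : (0:ℝ) ≤ ∫ x, ‖u 0 x‖^2 := integral_nonneg fun x => sq_nonneg _
    rw [hB'def]; linarith
  set V₁ : ℝ := (volume (Metric.ball (0:EuclideanSpace ℝ (Fin d)) 1)).toReal with hV₁
  have hV₁pos : 0 < V₁ := by
    refine ENNReal.toReal_pos (ne_of_gt (Metric.measure_ball_pos _ _ one_pos)) ?_
    exact ((measure_mono Metric.ball_subset_closedBall).trans_lt
      (isCompact_closedBall _ _).measure_lt_top).ne
  set c₃ : ℝ := ((2:ℝ)^(σ₂+1) * (2*B')^((d:ℝ)*σ₂/2) * V₁^σ₂)⁻¹ with hc₃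
  have hc₃pos : 0 < c₃ := by
    rw [hc₃]
    have h1 : (0:ℝ) < (2:ℝ)^(σ₂+1) := Real.rpow_pos_of_pos two_pos _
    have h2 : (0:ℝ) < (2*B')^((d:ℝ)*σ₂/2) := Real.rpow_pos_of_pos (by linarith) _
    have h3 : (0:ℝ) < V₁^σ₂ := Real.rpow_pos_of_pos hV₁pos _
    positivity
  have hd1 : (1:ℝ) ≤ (d:ℝ) := by exact_mod_cast hd
  set p : ℝ := σ₂+1+(d:ℝ)*σ₂/2 with hpdef
  set q : ℝ := 2 / (((d : ℝ) + 2) * σ₂) with hqdef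
  have hp1 : 1 < p := by rw [hpdef]; nlinarith
  have hq0 : 0 < q := by rw [hqdef]; positivity
  have hqp : q * (p - 1) = 1 := by
    rw [hpdef, hqdef]
    have hne : ((d:ℝ)+2)*σ₂ ≠ 0 := by positivity
    field_simp
    ring
  have hy1 : (∫ x, ‖u 1 x‖^2) ≤ B' := by
    have := (hB 1 zero_le_one).1
    rw [hB'def]; linarith
  obtain ⟨C, hC, hdecay⟩ := aux_ode (2*a*c₃) p q (by positivity) hp1 hq0 hqp
    (fun t => ∫ x, ‖u t x‖^2) (fun t => 2*a*∫ x, ‖u t x‖^(2*σ₂+2))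
    (fun t => integral_nonneg fun x => sq_nonneg _)
    (fun t ht => by
      have h := hdiss t ht
      convert h using 1
      ring)
    (fun t ht => by
      have hco := aux_coercive d hd σ₂ hσ₂ B' hB'pos (u t) (hmem2 t) (hmemp t) (hxint t)
        (le_trans (hB t ht).2.2 (by rw [hB'def]; linarith))
      rw [← hV₁, ← hc₃, ← hpdef] at hco
      calc 2*a*c₃*(∫ x, ‖u t x‖^2)^p = 2*a*(c₃*(∫ x, ‖u t x‖^2)^p) := by ring
        _ ≤ 2*a*∫ x, ‖u t x‖^(2*σ₂+2) :=
          mul_le_mul_of_nonneg_left hco (by positivity))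
    B' hB'pos hy1
  exact ⟨C, hC, fun t ht => by simpa [hqdef] using hdecay t ht⟩
end
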